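/- Let β > 1 be real, s > 0, E ⊆ [0,1) a Borel set, and μ a finite Borel measure on [0,1) with μ(E) > 0 and μ([0,1) ∖ E) = 0 (μ is supported on E). Suppose there exist a constant c > 0 and N₀ ∈ ℕ such that for every n ≥ N₀ and every β-admissible word ω of length n, μ(I_n(ω)) ≤ c · |I_n(ω)|^s. Then the Hausdorff dimension of E is at least s. -/

import Mathlib

open Set Filter MeasureTheory Topology
open scoped ENNReal

/-- The β-transformation `x ↦ βx mod 1`. -/
noncomputable def Tbeta (β : ℝ) (x : ℝ) : ℝ := β * x - ⌊β * x⌋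

/-- The asymptotic recurrence exponent
`r_β(x) = sup {r ∈ [0,∞] : |T_β^n x - x| < β^{-rn} for infinitely many n}`. -/
noncomputable def rBeta (β : ℝ) (x : ℝ) : ℝ≥0∞ :=
  ⨆ r ∈ {r : ℝ | 0 ≤ r ∧
      ∃ᶠ n : ℕ in atTop, |(Tbeta β)^[n] x - x| < β ^ (-(r * (n : ℝ)))},
    ENNReal.ofReal r

/-- The uniform recurrence exponent
`r̂_β(x) = sup {r̂ ∈ [0,∞] : ∀ N ≫ 1, ∃ 1 ≤ n ≤ N, |T_β^n x - x| < β^{-r̂N}}`. -/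
noncomputable def rHatBeta (β : ℝ) (x : ℝ) : ℝ≥0∞ :=
  ⨆ r ∈ {r : ℝ | 0 ≤ r ∧
      ∀ᶠ N : ℕ in atTop, ∃ n : ℕ, 1 ≤ n ∧ n ≤ N ∧
        |(Tbeta β)^[n] x - x| < β ^ (-(r * (N : ℝ)))},
    ENNReal.ofReal r

/-- The `n`-th digit `ε_n(x,β) = ⌊β T_β^{n-1} x⌋` of the β-expansion (for `n ≥ 1`). -/
noncomputable def epsDigit (β : ℝ) (x : ℝ) (n : ℕ) : ℤ := ⌊β * (Tbeta β)^[n - 1] x⌋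

/-- A word `ω` of length `n` over the digits is β-admissible if it occurs as the first `n`
digits of the β-expansion of some `x ∈ [0,1)`. -/
def IsAdmissible (β : ℝ) {n : ℕ} (ω : Fin n → ℤ) : Prop :=
  ∃ x ∈ Set.Ico (0 : ℝ) 1, ∀ j : Fin n, epsDigit β x ((j : ℕ) + 1) = ω j

/-- `Σ_β^n`, the set of β-admissible words of length `n`. -/
def SigmaSet (β : ℝ) (n : ℕ) : Set (Fin n → ℤ) := {ω | IsAdmissible β ω}

/-- The cylinder `I_n(ω)` of points of `[0,1)` whose first `n` digits form the word `ω`. -/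
def cylinder (β : ℝ) {n : ℕ} (ω : Fin n → ℤ) : Set ℝ :=
  {x ∈ Set.Ico (0 : ℝ) 1 | ∀ j : Fin n, epsDigit β x ((j : ℕ) + 1) = ω j}

/-- A word `ω` of length `n` is full if its cylinder has length `β^{-n}`. -/
def IsFull (β : ℝ) {n : ℕ} (ω : Fin n → ℤ) : Prop :=
  volume (cylinder β ω) = ENNReal.ofReal ((β ^ n)⁻¹)

namespace MDP

lemma Tbeta_mem (β x : ℝ) : Tbeta β x ∈ Ico (0:ℝ) 1 := by
  have : Tbeta β x = Int.fract (β * x) := rfl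
  rw [this]; exact ⟨Int.fract_nonneg _, Int.fract_lt_one _⟩

lemma Tbeta_zero (β : ℝ) : Tbeta β 0 = 0 := by simp [Tbeta]

lemma iter_zero (β : ℝ) (j : ℕ) : (Tbeta β)^[j] 0 = 0 := by
  induction j with
  | zero => rfl
  | succ k ih => rw [Function.iterate_succ_apply', ih, Tbeta_zero]

lemma iter_mem {β x : ℝ} (hx : x ∈ Ico (0:ℝ) 1) (n : ℕ) : (Tbeta β)^[n] x ∈ Ico (0:ℝ) 1 := by
  cases n with
  | zero => exact hx
  | succ k => rw [Function.iterate_succ_apply']; exact Tbeta_mem β _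

lemma iter_eq_zero_of_le {β y : ℝ} {m n : ℕ} (h : (Tbeta β)^[m] y = 0) (hmn : m ≤ n) :
    (Tbeta β)^[n] y = 0 := by
  rw [← Nat.sub_add_cancel hmn, Function.iterate_add_apply, h, iter_zero]

noncomputable def wd (β x : ℝ) (n : ℕ) : Fin n → ℤ := fun j => epsDigit β x ((j : ℕ) + 1)

lemma epsDigit_succ (β x : ℝ) (j : ℕ) : epsDigit β x (j + 1) = ⌊β * (Tbeta β)^[j] x⌋ := by
  simp [epsDigit]

lemma mem_cylAt_iff {β x : ℝ} {n : ℕ} {y : ℝ} :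
    y ∈ cylinder β (wd β x n) ↔ y ∈ Ico (0:ℝ) 1 ∧
      ∀ j < n, ⌊β * (Tbeta β)^[j] y⌋ = ⌊β * (Tbeta β)^[j] x⌋ := by
  constructor
  · rintro ⟨h1, h2⟩
    refine ⟨h1, fun j hj => ?_⟩
    have := h2 ⟨j, hj⟩
    simpa [wd, epsDigit_succ] using this
  · rintro ⟨h1, h2⟩
    refine ⟨h1, fun j => ?_⟩
    simpa [wd, epsDigit_succ] using h2 j j.2

lemma self_mem_cylAt {β x : ℝ} (hx : x ∈ Ico (0:ℝ) 1) (n : ℕ) : x ∈ cylinder β (wd β x n) :=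
  mem_cylAt_iff.2 ⟨hx, fun _ _ => rfl⟩

/-- Structure data of the level-`n` cylinder of `x`. -/
structure CD (β : ℝ) (n : ℕ) (x a t : ℝ) : Prop where
  ha : 0 ≤ a
  ht0 : 0 < t
  ht1 : t ≤ 1
  hb1 : a + t / β ^ n ≤ 1
  hcyl : cylinder β (wd β x n) = Ico a (a + t / β ^ n)
  haff : ∀ y, a ≤ y → y < a + t / β ^ n → (Tbeta β)^[n] y = β ^ n * (y - a)
  hbd : a + t / β ^ n < 1 →
    ∃ j, 1 ≤ j ∧ j ≤ n ∧ (t < 1 → j + 1 ≤ n) ∧ (Tbeta β)^[j] (a + t / β ^ n) = 0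

lemma exists_cd {β : ℝ} (hβ : 1 < β) {x : ℝ} (hx : x ∈ Ico (0:ℝ) 1) (n : ℕ) :
    ∃ a t, CD β n x a t := by
  have hβ0 : (0:ℝ) < β := lt_trans one_pos hβ
  induction n with
  | zero =>
    refine ⟨0, 1, le_refl _, one_pos, le_refl _, by norm_num, ?_, ?_, by norm_num⟩
    · ext y
      rw [mem_cylAt_iff]
      simp [Set.mem_Ico]
    · intro y hy1 hy2
      simp
  | succ n ih =>
    obtain ⟨a, t, cd⟩ := ih
    have hpn : (0:ℝ) < β ^ n := pow_pos hβ0 n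
    have hpn1 : (0:ℝ) < β ^ (n+1) := pow_pos hβ0 (n+1)
    set b := a + t / β ^ n with hbdef
    have hxmem : x ∈ Ico a b := by
      have := self_mem_cylAt (β := β) hx n
      rwa [cd.hcyl] at this
    have hTx : (Tbeta β)^[n] x = β ^ n * (x - a) := cd.haff x hxmem.1 hxmem.2
    set k : ℤ := ⌊β * (Tbeta β)^[n] x⌋ with hkdef
    have hk0 : (0:ℤ) ≤ k := by
      apply Int.floor_nonneg.2
      have : (0:ℝ) ≤ β ^ n * (x - a) := by nlinarith [hxmem.1]
      rw [hTx]; positivity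
    have hxb : β ^ n * (x - a) < t := by
      have h2 := (lt_div_iff₀ hpn).1 (sub_lt_iff_lt_add'.2 hxmem.2)
      nlinarith
    have hkup : (k:ℝ) < β * t := by
      calc (k:ℝ) ≤ β * (Tbeta β)^[n] x := Int.floor_le _
      _ < β * t := by rw [hTx]; nlinarith
    set a' := a + (k:ℝ) / β ^ (n+1) with ha'def
    set t' := min (β * t - k) 1 with ht'def
    have ht'0 : 0 < t' := lt_min (by linarith) one_pos
    have ht'1 : t' ≤ 1 := min_le_right _ _
    have hps : β ^ (n+1) = β ^ n * β := pow_succ β n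
    have hbmin : a' + t' / β ^ (n+1) = min b (a + ((k:ℝ)+1) / β ^ (n+1)) := by
      rcases le_total (β * t - k) 1 with h | h
      · have h1 : t / β ^ n ≤ ((k:ℝ)+1) / β ^ (n+1) := by
          rw [div_le_div_iff₀ hpn hpn1]
          calc t * β ^ (n+1) = (β * t) * β ^ n := by rw [hps]; ring
          _ ≤ ((k:ℝ)+1) * β ^ n := by nlinarith
        rw [min_eq_left (by linarith : b ≤ a + ((k:ℝ)+1) / β ^ (n+1))]
        rw [ht'def, min_eq_left h, ha'def, hbdef]
        field_simp
        ring
      · have h1 : ((k:ℝ)+1) / β ^ (n+1) ≤ t / β ^ n := by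
          rw [div_le_div_iff₀ hpn1 hpn]
          calc ((k:ℝ)+1) * β ^ n ≤ (β * t) * β ^ n := by nlinarith
          _ = t * β ^ (n+1) := by rw [hps]; ring
        rw [min_eq_right (by linarith : a + ((k:ℝ)+1) / β ^ (n+1) ≤ b)]
        rw [ht'def, min_eq_right h, ha'def]
        field_simp
        ring
    have haa' : a ≤ a' := by
      rw [ha'def]
      have : (0:ℝ) ≤ (k:ℝ) / β ^ (n+1) := by positivity
      linarith
    have ha'0 : 0 ≤ a' := le_trans cd.ha haa'
    have hfloork : ∀ y, a' ≤ y → y < a + ((k:ℝ)+1) / β ^ (n+1) →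
        ⌊β * (β ^ n * (y - a))⌋ = k := by
      intro y hy1 hy2
      have h1 : (k:ℝ) ≤ β ^ (n+1) * (y - a) := by
        rw [ha'def] at hy1
        have := (div_le_iff₀ hpn1).1 (le_sub_iff_add_le'.2 hy1)
        nlinarith
      have h2 : β ^ (n+1) * (y - a) < (k:ℝ) + 1 := by
        have := (lt_div_iff₀ hpn1).1 (sub_lt_iff_lt_add'.2 hy2)
        nlinarith
      have he : β * (β ^ n * (y - a)) = β ^ (n+1) * (y - a) := by rw [hps]; ring
      rw [he, Int.floor_eq_iff]
      · exact ⟨h1, by push_cast; exact h2⟩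
    refine ⟨a', t', ha'0, ht'0, ht'1, ?_, ?_, ?_, ?_⟩
    · rw [hbmin]
      exact le_trans (min_le_left _ _) cd.hb1
    · ext y
      rw [mem_cylAt_iff, Set.mem_Ico, hbmin]
      constructor
      · rintro ⟨hy01, hdig⟩
        have hycyl : y ∈ Ico a b := by
          rw [← cd.hcyl]
          exact mem_cylAt_iff.2 ⟨hy01, fun j hj => hdig j (Nat.lt_succ_of_lt hj)⟩
        have hdn := hdig n (Nat.lt_succ_self n)
        rw [cd.haff y hycyl.1 hycyl.2, ← hkdef] at hdn
        have h1 := Int.floor_le (β * (β ^ n * (y - a)))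
        have h2 := Int.lt_floor_add_one (β * (β ^ n * (y - a)))
        rw [hdn] at h1 h2
        constructor
        · have h3 : (k:ℝ) / β ^ (n+1) ≤ y - a := by
            rw [div_le_iff₀ hpn1]; nlinarith
          rw [ha'def]; linarith
        · refine lt_min hycyl.2 ?_
          have h3 : y - a < ((k:ℝ)+1) / β ^ (n+1) := by
            rw [lt_div_iff₀ hpn1]; nlinarith
          linarith
      · rintro ⟨hy1, hy2⟩
        have hyb : y < b := lt_of_lt_of_le hy2 (min_le_left _ _)
        have hyk1 : y < a + ((k:ℝ)+1) / β ^ (n+1) := lt_of_lt_of_le hy2 (min_le_right _ _)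
        have hya : a ≤ y := le_trans haa' hy1
        have hy01 : y ∈ Ico (0:ℝ) 1 :=
          ⟨le_trans ha'0 hy1, lt_of_lt_of_le hyb cd.hb1⟩
        refine ⟨hy01, fun j hj => ?_⟩
        have hycylmem : y ∈ cylinder β (wd β x n) := by
          rw [cd.hcyl]; exact ⟨hya, hyb⟩
        have hdig := (mem_cylAt_iff.1 hycylmem).2
        rcases Nat.lt_succ_iff_lt_or_eq.1 hj with h | h
        · exact hdig j h
        · subst h
          rw [cd.haff y hya hyb, ← hkdef]
          exact hfloork y hy1 hyk1
    · intro y hy1 hy2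
      rw [hbmin] at hy2
      have hyb : y < b := lt_of_lt_of_le hy2 (min_le_left _ _)
      have hyk1 : y < a + ((k:ℝ)+1) / β ^ (n+1) := lt_of_lt_of_le hy2 (min_le_right _ _)
      have hya : a ≤ y := le_trans haa' hy1
      rw [Function.iterate_succ_apply', cd.haff y hya hyb]
      show β * (β ^ n * (y - a)) - (⌊β * (β ^ n * (y - a))⌋ : ℝ) = β ^ (n+1) * (y - a')
      rw [hfloork y hy1 hyk1, ha'def, hps]
      field_simp
      ring
    · intro hlt1
      rcases le_or_gt b (a + ((k:ℝ)+1) / β ^ (n+1)) with hge | hlt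
      · have hb'b : a' + t' / β ^ (n+1) = b := by rw [hbmin, min_eq_left hge]
        rw [hb'b] at hlt1 ⊢
        obtain ⟨j, hj1, hj2, _, hj4⟩ := cd.hbd hlt1
        exact ⟨j, hj1, le_trans hj2 (Nat.le_succ n), fun _ => Nat.succ_le_succ hj2, hj4⟩
      · have hb'e : a' + t' / β ^ (n+1) = a + ((k:ℝ)+1) / β ^ (n+1) := by
          rw [hbmin, min_eq_right hlt.le]
        refine ⟨n+1, Nat.succ_le_succ (Nat.zero_le n), le_refl _, ?_, ?_⟩
        · intro ht'lt
          exfalso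
          have h1 : ((k:ℝ)+1) / β ^ (n+1) < t / β ^ n := by
            have hb2 : b = a + t / β ^ n := hbdef
            linarith [hlt]
          have h2 : ((k:ℝ)+1) < β * t := by
            by_contra hcon
            push_neg at hcon
            rw [div_lt_div_iff₀ hpn1 hpn] at h1
            have h3 : t * β ^ (n+1) = (β * t) * β ^ n := by rw [hps]; ring
            nlinarith [mul_le_mul_of_nonneg_right hcon hpn.le]
          have : t' = 1 := by rw [ht'def, min_eq_right (by linarith)]
          rw [this] at ht'lt; linarith
        · rw [hb'e]
          have hmem1 : a ≤ a + ((k:ℝ)+1) / β ^ (n+1) := by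
            have : (0:ℝ) ≤ ((k:ℝ)+1) / β ^ (n+1) := by positivity
            linarith
          rw [Function.iterate_succ_apply', cd.haff _ hmem1 hlt]
          have he : β ^ n * (a + ((k:ℝ)+1) / β ^ (n+1) - a) = ((k:ℝ)+1) / β := by
            rw [hps]; field_simp; ring
          rw [he]
          show β * (((k:ℝ)+1) / β) - (⌊β * (((k:ℝ)+1) / β)⌋ : ℝ) = 0
          have h2 : β * (((k:ℝ)+1) / β) = ((k:ℝ)+1) := by field_simp
          rw [h2]
          have : ((k:ℝ)+1) = ((k+1 : ℤ) : ℝ) := by push_cast; ring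
          rw [this, Int.floor_intCast]
          ring


lemma iter_eq_pow_of_zero_digits {β : ℝ} {z : ℝ} {k : ℕ}
    (h : ∀ i < k, ⌊β * (Tbeta β)^[i] z⌋ = 0) : (Tbeta β)^[k] z = β ^ k * z := by
  induction k with
  | zero => simp
  | succ k ih =>
    have hk := ih (fun i hi => h i (Nat.lt_succ_of_lt hi))
    rw [Function.iterate_succ_apply', hk]
    have h0 := h k (Nat.lt_succ_self k)
    rw [hk] at h0
    show β * (β ^ k * z) - (⌊β * (β ^ k * z)⌋ : ℝ) = β ^ (k+1) * z
    rw [h0]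
    push_cast
    rw [pow_succ]
    ring

lemma iter_eq_pow_of_lt {β : ℝ} (hβ : 1 < β) {z : ℝ} (hz : z ∈ Ico (0:ℝ) 1) {k : ℕ}
    (h : β ^ k * z < 1) : ∀ i ≤ k, (Tbeta β)^[i] z = β ^ i * z := by
  have hβ0 : (0:ℝ) < β := lt_trans one_pos hβ
  intro i hik
  induction i with
  | zero => simp
  | succ i ih =>
    have hik' : i ≤ k := Nat.le_of_succ_le hik
    have hi := ih hik'
    have hlt : β ^ (i+1) * z < 1 := by
      have hmono : β ^ (i+1) ≤ β ^ k := pow_le_pow_right₀ (le_of_lt hβ) hik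
      have : β ^ (i+1) * z ≤ β ^ k * z := by nlinarith [hz.1]
      linarith
    have hge : 0 ≤ β ^ (i+1) * z := mul_nonneg (by positivity) hz.1
    rw [Function.iterate_succ_apply', hi]
    show β * (β ^ i * z) - (⌊β * (β ^ i * z)⌋ : ℝ) = β ^ (i+1) * z
    have he : β * (β ^ i * z) = β ^ (i+1) * z := by rw [pow_succ]; ring
    rw [he, Int.floor_eq_zero_iff.2 ⟨hge, hlt⟩]
    simp

lemma zero_digits_of_lt {β : ℝ} (hβ : 1 < β) {z : ℝ} (hz : z ∈ Ico (0:ℝ) 1) {k : ℕ}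
    (h : β ^ k * z < 1) : ∀ i < k, ⌊β * (Tbeta β)^[i] z⌋ = 0 := by
  have hβ0 : (0:ℝ) < β := lt_trans one_pos hβ
  intro i hik
  rw [iter_eq_pow_of_lt hβ hz h i (le_of_lt hik)]
  have he : β * (β ^ i * z) = β ^ (i+1) * z := by rw [pow_succ]; ring
  rw [he]
  apply Int.floor_eq_zero_iff.2
  constructor
  · have : (0:ℝ) ≤ z := hz.1
    positivity
  · have hmono : β ^ (i+1) ≤ β ^ k := pow_le_pow_right₀ (le_of_lt hβ) hik
    nlinarith [hz.1]

lemma left_endpoint {β : ℝ} (hβ : 1 < β) {y a t : ℝ} {m n : ℕ} (hy : y ∈ Ico (0:ℝ) 1)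
    (hmn : m ≤ n) (hz : (Tbeta β)^[m] y = 0) (cd : CD β n y a t) : a = y := by
  have hβ0 : (0:ℝ) < β := lt_trans one_pos hβ
  have hpn : (0:ℝ) < β ^ n := pow_pos hβ0 n
  have hymem : y ∈ Ico a (a + t / β ^ n) := by
    rw [← cd.hcyl]; exact self_mem_cylAt hy n
  have hTn : (Tbeta β)^[n] y = 0 := iter_eq_zero_of_le hz hmn
  have := cd.haff y hymem.1 hymem.2
  rw [hTn] at this
  have : y - a = 0 := by
    by_contra hne
    have := this.symm
    have : β ^ n * (y - a) ≠ 0 := by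
      intro h0
      rcases mul_eq_zero.1 h0 with h | h
      · exact absurd h (ne_of_gt hpn)
      · exact hne h
    exact this (by linarith [cd.haff y hymem.1 hymem.2, hTn])
  linarith

/-- Claims B+C: right endpoint of a non-full cylinder whose left endpoint has
`T^m`-image zero is sent to `0` by `T^j` for some `1 ≤ j < m`. -/
lemma chain {β : ℝ} (hβ : 1 < β) {y a t : ℝ} {m n : ℕ} (hy : y ∈ Ico (0:ℝ) 1)
    (hm1 : 1 ≤ m) (hmn : m ≤ n) (hz : (Tbeta β)^[m] y = 0) (cd : CD β n y a t)
    (hnf : t < 1) (hb1 : a + t / β ^ n < 1) :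
    ∃ j, 1 ≤ j ∧ j + 1 ≤ m ∧ (Tbeta β)^[j] (a + t / β ^ n) = 0 := by
  have hβ0 : (0:ℝ) < β := lt_trans one_pos hβ
  have hpn : (0:ℝ) < β ^ n := pow_pos hβ0 n
  have hpm : (0:ℝ) < β ^ m := pow_pos hβ0 m
  have hay : a = y := left_endpoint hβ hy hmn hz cd
  rw [hay] at cd hb1 ⊢
  rcases eq_or_lt_of_le hmn with heq | hlt
  · subst heq
    obtain ⟨j, hj1, _, hj3, hj4⟩ := cd.hbd hb1
    exact ⟨j, hj1, hj3 hnf, hj4⟩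
  · obtain ⟨a2, t2, cd2⟩ := exists_cd hβ hy m
    have ha2 : a2 = y := left_endpoint hβ hy (le_refl m) hz cd2
    rw [ha2] at cd2
    have hseteq : Ico y (y + t / β ^ n) =
        Ico y (min (y + t2 / β ^ m) (y + (β ^ n)⁻¹)) := by
      rw [← cd.hcyl]
      ext z
      rw [mem_cylAt_iff]
      constructor
      · rintro ⟨hz01, hdig⟩
        have hzm : z ∈ Ico y (y + t2 / β ^ m) := by
          rw [← cd2.hcyl]
          exact mem_cylAt_iff.2 ⟨hz01, fun j hj => hdig j (lt_of_lt_of_le hj hmn)⟩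
        have hzn : z ∈ Ico y (y + t / β ^ n) := by
          rw [← cd.hcyl]; exact mem_cylAt_iff.2 ⟨hz01, hdig⟩
        refine ⟨hzm.1, lt_min hzm.2 ?_⟩
        have hT := cd.haff z hzn.1 hzn.2
        have hTlt : (Tbeta β)^[n] z < 1 := (iter_mem hz01 n).2
        rw [hT] at hTlt
        have : z - y < (β ^ n)⁻¹ := by
          rw [← one_div, lt_div_iff₀ hpn]
          nlinarith
        linarith
      · rintro ⟨hz1, hz2⟩
        have hzb2 : z < y + t2 / β ^ m := lt_of_lt_of_le hz2 (min_le_left _ _)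
        have hzbn : z < y + (β ^ n)⁻¹ := lt_of_lt_of_le hz2 (min_le_right _ _)
        have hzm : z ∈ cylinder β (wd β y m) := by rw [cd2.hcyl]; exact ⟨hz1, hzb2⟩
        obtain ⟨hz01, hdigm⟩ := mem_cylAt_iff.1 hzm
        refine ⟨hz01, fun j hj => ?_⟩
        rcases lt_or_ge j m with h | h
        · exact hdigm j h
        · set w := (Tbeta β)^[m] z with hwdef
          have hw01 : w ∈ Ico (0:ℝ) 1 := iter_mem hz01 m
          have hTm := cd2.haff z hz1 hzb2
          have hwlt : β ^ (n - m) * w < 1 := by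
            rw [hwdef, hTm]
            have h1 : β ^ (n - m) * (β ^ m * (z - y)) = β ^ n * (z - y) := by
              rw [← mul_assoc, ← pow_add]
              congr 2
              omega
            rw [h1]
            have h2 : z - y < (β ^ n)⁻¹ := by linarith
            calc β ^ n * (z - y) < β ^ n * (β ^ n)⁻¹ :=
                  mul_lt_mul_of_pos_left h2 hpn
            _ = 1 := mul_inv_cancel₀ (ne_of_gt hpn)
          have hdz : ⌊β * (Tbeta β)^[j] z⌋ = 0 := by
            have he : (Tbeta β)^[j] z = (Tbeta β)^[j - m] w := by
              rw [hwdef, ← Function.iterate_add_apply]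
              congr 1
              omega
            rw [he]
            exact zero_digits_of_lt hβ hw01 hwlt (j - m) (by omega)
          have hdy : ⌊β * (Tbeta β)^[j] y⌋ = 0 := by
            rw [iter_eq_zero_of_le hz h]
            simp
          rw [hdz, hdy]
    have hne : y < y + t / β ^ n := by
      have : 0 < t / β ^ n := div_pos cd.ht0 hpn
      linarith
    have hends := (Ico_eq_Ico_iff (Or.inl hne)).1 hseteq
    have hblt : y + t / β ^ n < y + (β ^ n)⁻¹ := by
      have : t / β ^ n < (β ^ n)⁻¹ := by
        rw [div_lt_iff₀ hpn, inv_mul_cancel₀ (ne_of_gt hpn)]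
        exact hnf
      linarith
    have hbb2 : y + t / β ^ n = y + t2 / β ^ m := by
      rcases min_cases (y + t2 / β ^ m) (y + (β ^ n)⁻¹) with ⟨hmin, _⟩ | ⟨hmin, _⟩
      · rw [hends.2, hmin]
      · exfalso
        rw [hends.2, hmin] at hblt
        exact lt_irrefl _ hblt
    have ht2 : t2 < 1 := by
      have h1 : t2 / β ^ m < (β ^ n)⁻¹ := by
        rw [hbb2] at hblt
        linarith
      have h2 : (β ^ n)⁻¹ ≤ (β ^ m)⁻¹ := by
        apply inv_anti₀ hpm
        exact pow_le_pow_right₀ (le_of_lt hβ) hmn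
      have h3 : t2 / β ^ m < (β ^ m)⁻¹ := lt_of_lt_of_le h1 h2
      rw [div_lt_iff₀ hpm, inv_mul_cancel₀ (ne_of_gt hpm)] at h3
      exact h3
    obtain ⟨j, hj1, _, hj3, hj4⟩ := cd2.hbd (by rw [← hbb2]; exact hb1)
    exact ⟨j, hj1, hj3 ht2, by rw [hbb2]; exact hj4⟩

lemma cyl_bound {β : ℝ} (hβ : 1 < β) (μ : Measure ℝ) {s c : ℝ} {N₀ : ℕ} (hs : 0 < s)
    (hμ : ∀ n : ℕ, N₀ ≤ n → ∀ ω : Fin n → ℤ, IsAdmissible β ω →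
      μ (cylinder β ω) ≤ ENNReal.ofReal c * volume (cylinder β ω) ^ s)
    {x : ℝ} (hx : x ∈ Ico (0:ℝ) 1) {n : ℕ} (hn : N₀ ≤ n) :
    μ (cylinder β (wd β x n)) ≤ ENNReal.ofReal c * ENNReal.ofReal ((β ^ n)⁻¹) ^ s := by
  have hβ0 : (0:ℝ) < β := lt_trans one_pos hβ
  have hpn : (0:ℝ) < β ^ n := pow_pos hβ0 n
  obtain ⟨a, t, cd⟩ := exists_cd hβ hx n
  have hadm : IsAdmissible β (wd β x n) := ⟨x, hx, fun j => rfl⟩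
  refine le_trans (hμ n hn _ hadm) ?_
  apply mul_le_mul_right
  apply ENNReal.rpow_le_rpow _ (le_of_lt hs)
  rw [cd.hcyl, Real.volume_Ico]
  apply ENNReal.ofReal_le_ofReal
  have h1 : t / β ^ n ≤ (β ^ n)⁻¹ := by
    rw [div_le_iff₀ hpn, inv_mul_cancel₀ (ne_of_gt hpn)]
    exact cd.ht1
  linarith

lemma rec_bound {β : ℝ} (hβ : 1 < β) (μ : Measure ℝ) {s c : ℝ} {N₀ : ℕ} (hs : 0 < s)
    (hμ : ∀ n : ℕ, N₀ ≤ n → ∀ ω : Fin n → ℤ, IsAdmissible β ω →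
      μ (cylinder β ω) ≤ ENNReal.ofReal c * volume (cylinder β ω) ^ s)
    {n : ℕ} (hn : N₀ ≤ n) (u : ℝ) :
    ∀ m : ℕ, 1 ≤ m → m ≤ n → ∀ y : ℝ, max u 0 ≤ y → y < 1 → (Tbeta β)^[m] y = 0 →
      μ (Ico y (min 1 (u + (β ^ n)⁻¹))) ≤
        (m + 1 : ℕ) * (ENNReal.ofReal c * ENNReal.ofReal ((β ^ n)⁻¹) ^ s) := by
  have hβ0 : (0:ℝ) < β := lt_trans one_pos hβ
  have hpn : (0:ℝ) < β ^ n := pow_pos hβ0 n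
  intro m
  induction m using Nat.strong_induction_on with
  | _ m IH =>
    intro hm1 hmn y hymax hy1 hz
    set V := min 1 (u + (β ^ n)⁻¹) with hV
    set M := ENNReal.ofReal c * ENNReal.ofReal ((β ^ n)⁻¹) ^ s with hM
    have hy0 : (0:ℝ) ≤ y := le_trans (le_max_right u 0) hymax
    have hy : y ∈ Ico (0:ℝ) 1 := ⟨hy0, hy1⟩
    obtain ⟨a, t, cd⟩ := exists_cd hβ hy n
    have hay : a = y := left_endpoint hβ hy hmn hz cd
    rw [hay] at cd
    set b := y + t / β ^ n with hb
    have hyb : y < b := by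
      have : 0 < t / β ^ n := div_pos cd.ht0 hpn
      rw [hb]; linarith
    have hMle : μ (Ico y b) ≤ M := by
      rw [hb, ← cd.hcyl]
      exact cyl_bound hβ μ hs hμ hy hn
    rcases le_or_gt V b with hVb | hbV
    · calc μ (Ico y V) ≤ μ (Ico y b) := measure_mono (Ico_subset_Ico_right hVb)
      _ ≤ M := hMle
      _ ≤ (m+1 : ℕ) * M := le_mul_of_one_le_left zero_le
            (by exact_mod_cast Nat.succ_le_succ (Nat.zero_le m))
    · have hbV1 : b < 1 := lt_of_lt_of_le hbV (min_le_left _ _)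
      have hbu : b < u + (β ^ n)⁻¹ := lt_of_lt_of_le hbV (min_le_right _ _)
      have hyu : u ≤ y := le_trans (le_max_left u 0) hymax
      have hnf : t < 1 := by
        have h1 : t / β ^ n < (β ^ n)⁻¹ := by
          rw [hb] at hbu; linarith
        rw [div_lt_iff₀ hpn, inv_mul_cancel₀ (ne_of_gt hpn)] at h1
        exact h1
      obtain ⟨j, hj1, hjm, hjz⟩ := chain hβ hy hm1 hmn hz cd hnf hbV1
      have hjlt : j < m := hjm
      have IHj := IH j hjlt hj1 (by omega) b (le_trans hymax (le_of_lt hyb)) hbV1 hjz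
      have hsplit : Ico y V = Ico y b ∪ Ico b V :=
        (Ico_union_Ico_eq_Ico (le_of_lt hyb) (le_of_lt hbV)).symm
      calc μ (Ico y V) ≤ μ (Ico y b) + μ (Ico b V) := by
            rw [hsplit]; exact measure_union_le _ _
      _ ≤ M + (j+1 : ℕ) * M := add_le_add hMle IHj
      _ = ((1 : ℝ≥0∞) + (j+1 : ℕ)) * M := by rw [add_mul, one_mul]
      _ ≤ (m+1 : ℕ) * M := by
          apply mul_le_mul_left
          have h2 : ((1 + (j+1) : ℕ) : ℝ≥0∞) ≤ ((m+1 : ℕ) : ℝ≥0∞) := by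
            exact_mod_cast Nat.cast_le.2 (by omega : 1 + (j+1) ≤ m+1)
          simpa using h2

lemma interval_bound {β : ℝ} (hβ : 1 < β) (μ : Measure ℝ) {s c : ℝ} {N₀ : ℕ} (hs : 0 < s)
    (hμ : ∀ n : ℕ, N₀ ≤ n → ∀ ω : Fin n → ℤ, IsAdmissible β ω →
      μ (cylinder β ω) ≤ ENNReal.ofReal c * volume (cylinder β ω) ^ s)
    {n : ℕ} (hn : N₀ ≤ n) (u : ℝ) :
    μ (Ico (max u 0) (min 1 (u + (β ^ n)⁻¹))) ≤
      (n + 2 : ℕ) * (ENNReal.ofReal c * ENNReal.ofReal ((β ^ n)⁻¹) ^ s) := by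
  have hβ0 : (0:ℝ) < β := lt_trans one_pos hβ
  have hpn : (0:ℝ) < β ^ n := pow_pos hβ0 n
  set u' := max u 0 with hu'
  set V := min 1 (u + (β ^ n)⁻¹) with hV
  set M := ENNReal.ofReal c * ENNReal.ofReal ((β ^ n)⁻¹) ^ s with hM
  rcases le_or_gt V u' with hVu | huV
  · rw [Ico_eq_empty (not_lt.2 hVu)]
    simp
  · have hu'1 : u' < 1 := lt_of_lt_of_le huV (min_le_left _ _)
    have hu'0 : 0 ≤ u' := le_max_right u 0
    have hu'mem : u' ∈ Ico (0:ℝ) 1 := ⟨hu'0, hu'1⟩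
    obtain ⟨a, t, cd⟩ := exists_cd hβ hu'mem n
    have hu'cyl : u' ∈ Ico a (a + t / β ^ n) := by
      rw [← cd.hcyl]; exact self_mem_cylAt hu'mem n
    set b := a + t / β ^ n with hb
    have hMle : μ (Ico u' b) ≤ M := by
      calc μ (Ico u' b) ≤ μ (Ico a b) := measure_mono (Ico_subset_Ico_left hu'cyl.1)
      _ ≤ M := by rw [hb, ← cd.hcyl]; exact cyl_bound hβ μ hs hμ hu'mem hn
    rcases le_or_gt V b with hVb | hbV
    · calc μ (Ico u' V) ≤ μ (Ico u' b) := measure_mono (Ico_subset_Ico_right hVb)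
      _ ≤ M := hMle
      _ ≤ (n+2 : ℕ) * M := le_mul_of_one_le_left zero_le
            (by exact_mod_cast Nat.le_add_left 1 (n+1))
    · have hbV1 : b < 1 := lt_of_lt_of_le hbV (min_le_left _ _)
      obtain ⟨j, hj1, hjn, _, hjz⟩ := cd.hbd hbV1
      have hu'b : u' < b := hu'cyl.2
      have IHj := rec_bound hβ μ hs hμ hn u j hj1 hjn b
        (le_of_lt hu'b) hbV1 hjz
      have hsplit : Ico u' V = Ico u' b ∪ Ico b V :=
        (Ico_union_Ico_eq_Ico (le_of_lt hu'b) (le_of_lt hbV)).symm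
      calc μ (Ico u' V) ≤ μ (Ico u' b) + μ (Ico b V) := by
            rw [hsplit]; exact measure_union_le _ _
      _ ≤ M + (j+1 : ℕ) * M := add_le_add hMle IHj
      _ = ((1 : ℝ≥0∞) + (j+1 : ℕ)) * M := by rw [add_mul, one_mul]
      _ ≤ (n+2 : ℕ) * M := by
          apply mul_le_mul_left
          have h2 : ((1 + (j+1) : ℕ) : ℝ≥0∞) ≤ ((n+2 : ℕ) : ℝ≥0∞) := by
            exact_mod_cast Nat.cast_le.2 (by omega : 1 + (j+1) ≤ n+2)
          simpa using h2

lemma rpow_pow_split {β : ℝ} (hβ : 1 < β) (s t : ℝ) (n : ℕ) :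
    (((β ^ n)⁻¹ : ℝ)) ^ s = (β ^ (t - s)) ^ n * ((β ^ n)⁻¹) ^ t := by
  have hβ0 : (0:ℝ) < β := lt_trans one_pos hβ
  have h1 : ((β ^ n)⁻¹ : ℝ) = β ^ (-(n:ℝ)) := by
    rw [← Real.rpow_natCast β n, ← Real.rpow_neg hβ0.le]
  rw [h1, ← Real.rpow_natCast (β ^ (t - s)) n, ← Real.rpow_mul hβ0.le,
    ← Real.rpow_mul hβ0.le, ← Real.rpow_mul hβ0.le, ← Real.rpow_add hβ0]
  ring_nf

lemma Mcast {β : ℝ} (hβ : 1 < β) {c s : ℝ} (hc : 0 < c) (n k : ℕ) :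
    ((k : ℝ≥0∞)) * (ENNReal.ofReal c * ENNReal.ofReal ((β ^ n)⁻¹) ^ s) =
      ENNReal.ofReal ((k : ℝ) * (c * ((β ^ n)⁻¹) ^ s)) := by
  have hβ0 : (0:ℝ) < β := lt_trans one_pos hβ
  have hpn : (0:ℝ) < (β ^ n)⁻¹ := inv_pos.2 (pow_pos hβ0 n)
  rw [ENNReal.ofReal_rpow_of_pos hpn, ← ENNReal.ofReal_mul hc.le,
    ← ENNReal.ofReal_natCast k, ← ENNReal.ofReal_mul (Nat.cast_nonneg k)]

lemma tendsto_bound {β : ℝ} (hβ : 1 < β) {c s : ℝ} (hc : 0 < c) (hs : 0 < s) :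
    Tendsto (fun n : ℕ => ENNReal.ofReal (((n:ℝ) + 2) * (c * ((β ^ n)⁻¹) ^ s)))
      atTop (𝓝 0) := by
  have hβ0 : (0:ℝ) < β := lt_trans one_pos hβ
  have hq1 : β ^ (-s) < 1 := Real.rpow_lt_one_of_one_lt_of_neg hβ (by linarith)
  have hq0 : 0 ≤ β ^ (-s) := Real.rpow_nonneg hβ0.le _
  have hre : Tendsto (fun n : ℕ => ((n:ℝ) + 2) * (c * ((β ^ n)⁻¹) ^ s)) atTop (𝓝 0) := by
    have hid : ∀ n : ℕ, ((n:ℝ) + 2) * (c * ((β ^ n)⁻¹) ^ s) =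
        c * ((n:ℝ) * (β ^ (-s)) ^ n) + (2 * c) * (β ^ (-s)) ^ n := by
      intro n
      have := rpow_pow_split hβ s 0 n
      rw [zero_sub] at this
      rw [this]
      have h0 : (((β ^ n)⁻¹ : ℝ)) ^ (0:ℝ) = 1 := Real.rpow_zero _
      rw [h0]
      ring
    simp only [hid]
    have h1 := (tendsto_self_mul_const_pow_of_lt_one hq0 hq1).const_mul c
    have h2 := (tendsto_pow_atTop_nhds_zero_of_lt_one hq0 hq1).const_mul (2 * c)
    simpa using h1.add h2
  simpa using ENNReal.tendsto_ofReal hre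



lemma singleton_zero {β : ℝ} (hβ : 1 < β) (μ : Measure ℝ) {s c : ℝ} {N₀ : ℕ}
    (hs : 0 < s) (hc : 0 < c)
    (hμ : ∀ n : ℕ, N₀ ≤ n → ∀ ω : Fin n → ℤ, IsAdmissible β ω →
      μ (cylinder β ω) ≤ ENNReal.ofReal c * volume (cylinder β ω) ^ s)
    (hout : μ (Set.Ico (0 : ℝ) 1)ᶜ = 0) (x : ℝ) : μ {x} = 0 := by
  have hβ0 : (0:ℝ) < β := lt_trans one_pos hβ
  rcases em (x ∈ Ico (0:ℝ) 1) with hx | hx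
  · have hble : ∀ n : ℕ, N₀ ≤ n →
        μ {x} ≤ ENNReal.ofReal (((n:ℝ)+2) * (c * ((β ^ n)⁻¹) ^ s)) := by
      intro n hn
      have hpn : (0:ℝ) < (β ^ n)⁻¹ := inv_pos.2 (pow_pos hβ0 n)
      have hsub : {x} ⊆ Ico (max (x - (β ^ n)⁻¹/2) 0)
          (min 1 ((x - (β ^ n)⁻¹/2) + (β ^ n)⁻¹)) := by
        intro z hz
        rcases hz with rfl
        constructor
        · exact max_le (by linarith) hx.1
        · exact lt_min hx.2 (by linarith)
      calc μ {x} ≤ μ (Ico (max (x - (β ^ n)⁻¹/2) 0)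
            (min 1 ((x - (β ^ n)⁻¹/2) + (β ^ n)⁻¹))) := measure_mono hsub
      _ ≤ ((n+2:ℕ) : ℝ≥0∞) * (ENNReal.ofReal c * ENNReal.ofReal ((β ^ n)⁻¹) ^ s) :=
          interval_bound hβ μ hs hμ hn _
      _ = ENNReal.ofReal (((n:ℝ)+2) * (c * ((β ^ n)⁻¹) ^ s)) := by
          rw [Mcast hβ hc n (n+2)]
          push_cast
          ring_nf
    refine le_antisymm ?_ zero_le
    refine ge_of_tendsto (tendsto_bound hβ hc hs) ?_
    filter_upwards [eventually_ge_atTop N₀] with n hn using hble n hn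
  · have hxs : {x} ⊆ (Ico (0:ℝ) 1)ᶜ := by simpa using hx
    exact le_antisymm (le_trans (measure_mono hxs) (le_of_eq hout)) zero_le

lemma set_bound {β : ℝ} (hβ : 1 < β) (μ : Measure ℝ) {s c : ℝ} {N₀ : ℕ}
    (hs : 0 < s) (hc : 0 < c)
    (hμ : ∀ n : ℕ, N₀ ≤ n → ∀ ω : Fin n → ℤ, IsAdmissible β ω →
      μ (cylinder β ω) ≤ ENNReal.ofReal c * volume (cylinder β ω) ^ s)
    (hout : μ (Set.Ico (0 : ℝ) 1)ᶜ = 0) {t : ℝ} (ht0 : 0 < t) (hts : t < s) :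
    ∃ C : ℝ≥0∞, C ≠ 0 ∧ C ≠ ∞ ∧ ∃ ε : ℝ≥0∞, 0 < ε ∧
      ∀ U : Set ℝ, EMetric.diam U ≤ ε → μ U ≤ C * EMetric.diam U ^ t := by
  classical
  have hβ0 : (0:ℝ) < β := lt_trans one_pos hβ
  set q := β ^ (t - s) with hq
  have hq0 : 0 ≤ q := Real.rpow_nonneg hβ0.le _
  have hq1 : q < 1 := Real.rpow_lt_one_of_one_lt_of_neg hβ (by linarith)
  have htd : Tendsto (fun k : ℕ => ((k:ℝ)+2) * c * q ^ k) atTop (𝓝 0) := by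
    have h1 := (tendsto_self_mul_const_pow_of_lt_one hq0 hq1).const_mul c
    have h2 := (tendsto_pow_atTop_nhds_zero_of_lt_one hq0 hq1).const_mul (2*c)
    have h3 := h1.add h2
    have he : ∀ k : ℕ, c * ((k:ℝ) * q ^ k) + (2*c) * q ^ k = ((k:ℝ)+2) * c * q ^ k := by
      intro k; ring
    simp only [he] at h3
    simpa using h3
  obtain ⟨A, hA⟩ := htd.bddAbove_range
  set A' := max A 1 with hA'
  have hA'1 : (1:ℝ) ≤ A' := le_max_right _ _
  have hA'0 : (0:ℝ) < A' := lt_of_lt_of_le one_pos hA'1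
  have hAle : ∀ k : ℕ, ((k:ℝ)+2) * c * q ^ k ≤ A' := fun k =>
    le_trans (hA (Set.mem_range_self k)) (le_max_left _ _)
  set N₁ := max N₀ 1 with hN₁
  set CR := A' * (2*β) ^ t with hCR
  have h2β : (0:ℝ) < 2*β := by linarith
  have hCR0 : (0:ℝ) < CR := mul_pos hA'0 (Real.rpow_pos_of_pos h2β t)
  have hεR : (0:ℝ) < (2 * β ^ (N₁+1))⁻¹ := by positivity
  refine ⟨ENNReal.ofReal CR, by simp [ENNReal.ofReal_eq_zero, not_le, hCR0],
    ENNReal.ofReal_ne_top, ENNReal.ofReal ((2 * β ^ (N₁+1))⁻¹), ENNReal.ofReal_pos.2 hεR, ?_⟩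
  intro U hU
  rcases eq_empty_or_nonempty U with rfl | ⟨y₀, hy₀⟩
  · simp
  have hdne : EMetric.diam U ≠ ∞ := ne_top_of_le_ne_top ENNReal.ofReal_ne_top hU
  set d := (EMetric.diam U).toReal with hd
  have hd0 : (0:ℝ) ≤ d := ENNReal.toReal_nonneg
  have hdiam : EMetric.diam U = ENNReal.ofReal d := (ENNReal.ofReal_toReal hdne).symm
  rcases eq_or_lt_of_le hd0 with hdz | hdpos
  · have hdiam0 : EMetric.diam U = 0 := by rw [hdiam, ← hdz]; simp
    have hss : U.Subsingleton := EMetric.diam_eq_zero_iff.1 hdiam0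
    have hsub : U ⊆ {y₀} := fun z hz => by simp [hss hz hy₀]
    calc μ U ≤ μ {y₀} := measure_mono hsub
    _ = 0 := singleton_zero hβ μ hs hc hμ hout y₀
    _ ≤ _ := zero_le
  · have hdub : d ≤ (2 * β ^ (N₁+1))⁻¹ := by
      have h2 := ENNReal.toReal_mono ENNReal.ofReal_ne_top hU
      rwa [ENNReal.toReal_ofReal hεR.le] at h2
    have h2d : 2*d ≤ (β ^ (N₁+1))⁻¹ := by
      rw [mul_inv] at hdub
      have hb1 : (0:ℝ) < (β ^ (N₁+1))⁻¹ := by positivity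
      nlinarith
    -- find n with (β^(n+1))⁻¹ ≤ 2d < (β^n)⁻¹ and N₁ ≤ n
    have hex : ∃ k : ℕ, (β ^ k)⁻¹ ≤ 2*d := by
      obtain ⟨k, hk⟩ := pow_unbounded_of_one_lt ((2*d)⁻¹) hβ
      refine ⟨k, ?_⟩
      rw [inv_le_comm₀ (pow_pos hβ0 k) (by linarith)]
      exact le_of_lt hk
    set k₀ := Nat.find hex with hk₀
    have hPk : (β ^ k₀)⁻¹ ≤ 2*d := Nat.find_spec hex
    have hge : ∀ m : ℕ, (β ^ m)⁻¹ ≤ 2*d → N₁ + 1 ≤ m := by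
      intro m hm
      have h3 : (β ^ m)⁻¹ ≤ (β ^ (N₁+1))⁻¹ := le_trans hm h2d
      have h4 : β ^ (N₁+1) ≤ β ^ m :=
        (inv_le_inv₀ (pow_pos hβ0 _) (pow_pos hβ0 _)).1 h3
      exact (pow_le_pow_iff_right₀ hβ).1 h4
    have hk₀1 : N₁ + 1 ≤ k₀ := hge k₀ hPk
    set n := k₀ - 1 with hn
    have hk₀n : k₀ = n + 1 := by omega
    have hnN₁ : N₁ ≤ n := by omega
    have hnN₀ : N₀ ≤ n := le_trans (le_max_left N₀ 1) hnN₁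
    have hup : (β ^ (n+1))⁻¹ ≤ 2*d := by rw [← hk₀n]; exact hPk
    have hlow : 2*d < (β ^ n)⁻¹ := by
      by_contra hcon
      push_neg at hcon
      have := Nat.find_min hex (m := n) (by omega)
      exact this hcon
    have hzbound : ∀ z ∈ U, |z - y₀| ≤ d := by
      intro z hz
      have h5 := EMetric.edist_le_diam_of_mem hz hy₀
      have h6 := ENNReal.toReal_mono hdne h5
      have h7 : dist z y₀ ≤ d := by rw [dist_edist]; exact h6
      rwa [Real.dist_eq] at h7
    set u := y₀ - d with hu
    have hsub : U ∩ Ico (0:ℝ) 1 ⊆ Ico (max u 0) (min 1 (u + (β ^ n)⁻¹)) := by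
      rintro z ⟨hzU, hz01⟩
      have h7 := hzbound z hzU
      rw [abs_le] at h7
      exact ⟨max_le (by rw [hu]; linarith [h7.1]) hz01.1,
        lt_min hz01.2 (by rw [hu]; linarith [h7.2])⟩
    have hcover : U ⊆ (U ∩ Ico (0:ℝ) 1) ∪ (Ico (0:ℝ) 1)ᶜ := by
      intro z hz
      by_cases h : z ∈ Ico (0:ℝ) 1
      · exact Or.inl ⟨hz, h⟩
      · exact Or.inr h
    have hmain : μ U ≤ ENNReal.ofReal (((n:ℝ)+2) * (c * ((β ^ n)⁻¹) ^ s)) := by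
      calc μ U ≤ μ ((U ∩ Ico (0:ℝ) 1) ∪ (Ico (0:ℝ) 1)ᶜ) := measure_mono hcover
      _ ≤ μ (U ∩ Ico (0:ℝ) 1) + μ (Ico (0:ℝ) 1)ᶜ := measure_union_le _ _
      _ = μ (U ∩ Ico (0:ℝ) 1) := by rw [hout, add_zero]
      _ ≤ μ (Ico (max u 0) (min 1 (u + (β ^ n)⁻¹))) := measure_mono hsub
      _ ≤ ((n+2:ℕ) : ℝ≥0∞) * (ENNReal.ofReal c * ENNReal.ofReal ((β ^ n)⁻¹) ^ s) :=
          interval_bound hβ μ hs hμ hnN₀ u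
      _ = ENNReal.ofReal (((n:ℝ)+2) * (c * ((β ^ n)⁻¹) ^ s)) := by
          rw [Mcast hβ hc n (n+2)]
          push_cast
          ring_nf
    refine le_trans hmain ?_
    have hbase : ((β ^ n)⁻¹ : ℝ) ≤ (2*β)*d := by
      have he : ((β ^ n)⁻¹ : ℝ) = β * (β ^ (n+1))⁻¹ := by
        rw [pow_succ]
        field_simp
      rw [he]
      calc β * (β ^ (n+1))⁻¹ ≤ β * (2*d) := by nlinarith [hup]
      _ = (2*β)*d := by ring
    have hreal : ((n:ℝ)+2) * (c * ((β ^ n)⁻¹) ^ s) ≤ CR * d ^ t := by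
      have hsplit := rpow_pow_split hβ s t n
      have hstep1 : ((n:ℝ)+2) * (c * ((β ^ n)⁻¹) ^ s)
          = (((n:ℝ)+2) * c * q ^ n) * ((β ^ n)⁻¹) ^ t := by rw [hsplit, hq]; ring
      rw [hstep1]
      have hrt0 : (0:ℝ) ≤ ((β ^ n)⁻¹ : ℝ) ^ t := Real.rpow_nonneg (by positivity) _
      have hstep2 : (((n:ℝ)+2) * c * q ^ n) * ((β ^ n)⁻¹) ^ t ≤ A' * ((β ^ n)⁻¹) ^ t :=
        mul_le_mul_of_nonneg_right (hAle n) hrt0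
      refine le_trans hstep2 ?_
      have hstep3 : ((β ^ n)⁻¹ : ℝ) ^ t ≤ ((2*β)*d) ^ t :=
        Real.rpow_le_rpow (by positivity) hbase ht0.le
      have hstep4 : (((2*β)*d) : ℝ) ^ t = (2*β) ^ t * d ^ t := Real.mul_rpow h2β.le hd0
      calc A' * ((β ^ n)⁻¹ : ℝ) ^ t ≤ A' * (((2*β)*d) ^ t) :=
          mul_le_mul_of_nonneg_left hstep3 hA'0.le
      _ = CR * d ^ t := by rw [hstep4, hCR]; ring
    calc ENNReal.ofReal (((n:ℝ)+2) * (c * ((β ^ n)⁻¹) ^ s)) ≤ ENNReal.ofReal (CR * d ^ t) :=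
        ENNReal.ofReal_le_ofReal hreal
    _ = ENNReal.ofReal CR * EMetric.diam U ^ t := by
        rw [ENNReal.ofReal_mul hCR0.le, hdiam, ENNReal.ofReal_rpow_of_pos hdpos]

end MDP

theorem mass_distribution_principle (β : ℝ) (hβ : 1 < β) (s : ℝ) (hs : 0 < s)
    (E : Set ℝ) (hE : MeasurableSet E) (hE1 : E ⊆ Set.Ico (0 : ℝ) 1)
    (μ : Measure ℝ) [IsFiniteMeasure μ]
    (hout : μ (Set.Ico (0 : ℝ) 1)ᶜ = 0)
    (hnull : μ (Set.Ico (0 : ℝ) 1 \ E) = 0) (hposE : 0 < μ E)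
    (c : ℝ) (hc : 0 < c) (N₀ : ℕ)
    (hμ : ∀ n : ℕ, N₀ ≤ n → ∀ ω : Fin n → ℤ, IsAdmissible β ω →
      μ (cylinder β ω) ≤ ENNReal.ofReal c * volume (cylinder β ω) ^ s) :
    ENNReal.ofReal s ≤ dimH E := by
  refine ENNReal.le_of_forall_nnreal_lt ?_
  intro r hr
  rcases eq_or_ne r 0 with rfl | hr0
  · simp
  have hrs : (r:ℝ) < s := by
    have h2 := (ENNReal.lt_ofReal_iff_toReal_lt ENNReal.coe_ne_top).1 hr
    simpa using h2
  have hrpos : (0:ℝ) < (r:ℝ) := by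
    exact_mod_cast pos_iff_ne_zero.2 hr0
  obtain ⟨C, hC0, hCtop, ε, hε, hbd⟩ := MDP.set_bound hβ μ hs hc hμ hout hrpos hrs
  have hle : C⁻¹ • μ ≤ μH[(r:ℝ)] := by
    refine MeasureTheory.Measure.le_hausdorffMeasure _ _ ε hε ?_
    intro U hU
    rw [Measure.smul_apply, smul_eq_mul]
    calc C⁻¹ * μ U ≤ C⁻¹ * (C * EMetric.diam U ^ (r:ℝ)) :=
        mul_le_mul_right (hbd U hU) _
    _ = EMetric.diam U ^ (r:ℝ) := by
        rw [← mul_assoc, ENNReal.inv_mul_cancel hC0 hCtop, one_mul]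
  have h3 : C⁻¹ * μ E ≤ μH[(r:ℝ)] E := by
    have := Measure.le_iff'.1 hle E
    rwa [Measure.smul_apply, smul_eq_mul] at this
  have hHn0 : μH[(r:ℝ)] E ≠ 0 := by
    intro h0
    rw [h0, le_zero_iff] at h3
    rcases mul_eq_zero.1 h3 with h | h
    · exact (ENNReal.inv_ne_zero.2 hCtop) h
    · exact (ne_of_gt hposE) h
  exact le_dimH_of_hausdorffMeasure_ne_zero hHn0
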